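/- Euler's identity: the third power of the Dedekind eta function equals the unary theta series, i.e., η(τ)³ = Σ_{m ∈ ℤ} (4m+1) q^{(4m+1)²/8}, where q = e^{2πiτ}. Equivalently, as an identity of formal power series in q^{1/8}: q^{3/8} ∏_{n≥1} (1-q^n)³ = Σ_{m ∈ ℤ} (4m+1) q^{(4m+1)²/8}. -/

import Mathlib

open Finset Polynomial

namespace EulerEta

abbrev R : Type := PowerSeries ℤ
noncomputable abbrev q : R := PowerSeries.X

noncomputable def Q : ℕ → ℕ → R
  | _, 0 => 1
  | 0, _+1 => 0
  | m+1, j+1 => Q m j + q^(j+1) * Q m (j+1)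

lemma Q_zero (m : ℕ) : Q m 0 = 1 := by cases m <;> rfl

lemma pascalA (m j : ℕ) : Q (m+1) (j+1) = Q m j + q^(j+1) * Q m (j+1) := rfl

lemma Q_eq_zero : ∀ {m j : ℕ}, m < j → Q m j = 0
  | 0, _+1, _ => rfl
  | m+1, j+1, h => by
      rw [pascalA, Q_eq_zero (by omega), Q_eq_zero (by omega), mul_zero, add_zero]

lemma Q_one : ∀ m : ℕ, Q m 1 = ∑ l ∈ range m, q^l
  | 0 => by simp [Q]
  | m+1 => by
      rw [pascalA, Q_zero, Q_one m, geom_sum_succ, pow_one]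
      ring

lemma Q_diag : ∀ m : ℕ, Q m m = 1
  | 0 => rfl
  | m+1 => by rw [pascalA, Q_diag m, Q_eq_zero (by omega), mul_zero, add_zero]

lemma pascalB : ∀ m j : ℕ, Q (m+1) (j+1) = q^(m-j) * Q m j + Q m (j+1)
  | m, 0 => by
      rw [pascalA, Q_zero, mul_one, Nat.sub_zero, Q_one]
      simp only [zero_add, pow_one]
      rw [← geom_sum_succ', geom_sum_succ]
      ring
  | 0, j+1 => by
      rw [Q_eq_zero (by omega), Q_eq_zero (by omega), Q_eq_zero (by omega)]
      simp
  | m+1, j+1 => by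
      rcases le_or_gt (j+1) m with h | h
      · have e0 : m + 1 + 1 = (m+1)+1 := rfl
        have hA1 : Q (m+1) (j+1) = Q m j + q^(j+1) * Q m (j+1) := pascalA m j
        have hA2 : Q (m+1) (j+1+1) = Q m (j+1) + q^(j+1+1) * Q m (j+1+1) := pascalA m (j+1)
        have x1 : j+1+1 + (m-(j+1)) = m+1 := by omega
        have x2 : m-j + (j+1) = m+1 := by omega
        have e1 : q^(j+1+1) * q^(m-(j+1)) = q^(m+1) := by rw [← pow_add, x1]
        have e2 : q^(m-j) * q^(j+1) = q^(m+1) := by rw [← pow_add, x2]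
        have e3 : m + 1 - (j + 1) = m - j := by omega
        calc Q (m+1+1) (j+1+1) = Q (m+1) (j+1) + q^(j+1+1) * Q (m+1) (j+1+1) := pascalA (m+1) (j+1)
          _ = (q^(m-j) * Q m j + Q m (j+1)) + q^(j+1+1) * (q^(m-(j+1)) * Q m (j+1) + Q m (j+1+1)) := by
              rw [← pascalB m j, ← pascalB m (j+1)]
          _ = q^(m+1-(j+1)) * Q (m+1) (j+1) + Q (m+1) (j+1+1) := by
              rw [hA1, hA2, e3]
              linear_combination Q m (j+1) * e1 - Q m (j+1) * e2
      · obtain rfl | h2 : j = m ∨ m < j := by omega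
        · rw [Q_diag, Q_diag, Q_eq_zero (show j+1 < j+1+1 by omega)]
          simp
        · rw [Q_eq_zero (show m+1 < j+1 by omega), Q_eq_zero (show m+1+1 < j+1+1 by omega),
            Q_eq_zero (show m+1 < j+1+1 by omega)]
          simp

noncomputable def E (n : ℕ) : R := ∏ l ∈ Icc 1 n, (1 - q^l)

lemma E_succ (n : ℕ) : E (n+1) = E n * (1 - q^(n+1)) := by
  rw [E, E, Finset.prod_Icc_succ_top (by omega)]

lemma E_zero : E 0 = 1 := by simp [E]

lemma Q_mul_E : ∀ m j : ℕ, j ≤ m → Q m j * (E j * E (m-j)) = E m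
  | m, 0, _ => by rw [Q_zero, Nat.sub_zero, E_zero, one_mul, one_mul]
  | 0, j+1, h => by omega
  | m+1, j+1, h => by
      obtain rfl | h' : j = m ∨ j + 1 ≤ m := by omega
      · rw [Q_diag, Nat.sub_self, E_zero, mul_one, one_mul]
      · have e3 : m+1-(j+1) = m-(j+1)+1 := by omega
        have e4 : m - j = (m-(j+1)) + 1 := by omega
        have x1 : (j+1) + ((m-(j+1))+1) = m+1 := by omega
        have epow : q^(j+1) * q^((m-(j+1))+1) = q^(m+1) := by rw [← pow_add, x1]
        have IH1 : Q m j * (E j * (E (m-(j+1)) * (1 - q^((m-(j+1))+1)))) = E m := by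
          have := Q_mul_E m j (by omega)
          rwa [e4, E_succ] at this
        have IH2 : Q m (j+1) * ((E j * (1 - q^(j+1))) * E (m-(j+1))) = E m := by
          have := Q_mul_E m (j+1) h'
          rwa [E_succ] at this
        rw [e3, pascalA, E_succ (m-(j+1)), E_succ j, E_succ m]
        have h5 : E (m+1) = E m * (1 - q^(m+1)) := E_succ m
        linear_combination (1 - q^(j+1)) * IH1 + q^(j+1) * (1 - q^((m-(j+1))+1)) * IH2 -
          E m * epow



def t (k : ℤ) : ℕ := (k*(k+1)).toNat / 2

lemma t_cast (k : ℤ) : (t k : ℤ) * 2 = k * (k+1) := by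
  have h0 : 0 ≤ k * (k+1) := by
    rcases le_or_gt 0 k with h | h
    · exact mul_nonneg h (by omega)
    · nlinarith [mul_nonneg (show (0:ℤ) ≤ -k by omega) (show (0:ℤ) ≤ -(k+1) by omega)]
  obtain ⟨c, hc⟩ := Int.even_mul_succ_self k
  unfold t
  set x := k * (k + 1)
  omega

lemma t_add (k k' : ℤ) (c c' : ℕ) (h : k'*(k'+1) + 2*(c':ℤ) = k*(k+1) + 2*(c:ℤ)) :
    t k' + c' = t k + c := by
  have h1 := t_cast k
  have h2 := t_cast k'
  zify
  linarith

noncomputable def sg (n : ℕ) : R := (-1)^n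

lemma sg_succ (n : ℕ) : sg (n+1) = -sg n := by rw [sg, sg, pow_succ]; ring

noncomputable def a (n i : ℕ) : R := sg (n+i) * (Q (2*n) i * q^(t ((i:ℤ) - n)))

lemma pow_q_t_eq {α β : ℕ} {k k' : ℤ} (h : t k' + α = t k + β) :
    q^α * q^(t k') = q^β * q^(t k) := by
  rw [← pow_add, ← pow_add]
  congr 1
  omega

lemma ar0 (n : ℕ) : a (n+1) 0 = a n 0 * (-(q^n)) := by
  rw [a, a]
  have c1 : ((0:ℕ):ℤ) - ((n+1:ℕ):ℤ) = -(n:ℤ) - 1 := by push_cast; ring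
  have c0 : ((0:ℕ):ℤ) - ((n:ℕ):ℤ) = -(n:ℤ) := by push_cast; ring
  rw [c1, c0]
  have e2 : t (-(n:ℤ) - 1) + 0 = t (-(n:ℤ)) + n := by
    apply t_add <;> push_cast <;> ring
  have hexp : q^(0:ℕ) * q^(t (-(n:ℤ) - 1)) = q^n * q^(t (-(n:ℤ))) := pow_q_t_eq (by omega)
  simp only [Nat.add_zero]
  rw [Q_zero, Q_zero, sg_succ]
  linear_combination (-(sg n)) * hexp

lemma ar1 (n : ℕ) : a (n+1) 1 = a n 0 * (1 + q^(2*n+1)) + a n 1 * (-(q^n)) := by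
  rw [a, a, a]
  have c1 : ((1:ℕ):ℤ) - ((n+1:ℕ):ℤ) = -(n:ℤ) := by push_cast; ring
  have c0 : ((0:ℕ):ℤ) - ((n:ℕ):ℤ) = -(n:ℤ) := by push_cast; ring
  have c2 : ((1:ℕ):ℤ) - ((n:ℕ):ℤ) = 1 - (n:ℤ) := by push_cast; ring
  rw [c1, c0, c2]
  have e2 : t (1 - (n:ℤ)) + n = t (-(n:ℤ)) + 1 := by
    apply t_add <;> push_cast <;> ring
  have hexp : q^n * q^(t (1 - (n:ℤ))) = q^(1:ℕ) * q^(t (-(n:ℤ))) := pow_q_t_eq (by omega)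
  have hQ : Q (2*(n+1)) 1 = 1 + q^(2*n+1) + q * Q (2*n) 1 := by
    rw [show 2*(n+1) = (2*n+1)+1 from by ring, Q_one, Q_one, geom_sum_succ', geom_sum_succ]
    ring
  rw [hQ, Q_zero, sg_succ (n+1), sg_succ n, pow_one] at *
  ring_nf
  ring_nf at hexp
  linear_combination (-(sg n * Q (n*2) 1)) * hexp

lemma Q_step (n j : ℕ) :
    Q (2*n+2) (j+2) = (1+q^(2*n+1)) * Q (2*n) (j+1) + q^(j+2) * Q (2*n) (j+2)
      + q^(2*n-j) * Q (2*n) j := by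
  rcases le_or_gt (j+1) (2*n) with h | h
  · have hA : Q (2*n+2) (j+2) = Q (2*n+1) (j+1) + q^(j+2) * Q (2*n+1) (j+2) :=
      pascalA (2*n+1) (j+1)
    have hB1 : Q (2*n+1) (j+1) = q^(2*n-j) * Q (2*n) j + Q (2*n) (j+1) := pascalB (2*n) j
    have hB2 : Q (2*n+1) (j+2) = q^(2*n-(j+1)) * Q (2*n) (j+1) + Q (2*n) (j+2) :=
      pascalB (2*n) (j+1)
    have e : q^(j+2) * q^(2*n-(j+1)) = q^(2*n+1) := by
      rw [← pow_add, show (j+2) + (2*n-(j+1)) = 2*n+1 from by omega]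
    rw [hA, hB1, hB2]
    linear_combination Q (2*n) (j+1) * e
  · obtain rfl | h2 : j = 2*n ∨ 2*n < j := by omega
    · rw [Q_diag, Q_diag, Q_eq_zero (show 2*n < 2*n+1 by omega),
        Q_eq_zero (show 2*n < 2*n+2 by omega)]
      simp
    · rw [Q_eq_zero (show 2*n+2 < j+2 by omega), Q_eq_zero (show 2*n < j+1 by omega),
        Q_eq_zero (show 2*n < j+2 by omega), Q_eq_zero (show 2*n < j by omega)]
      simp



lemma sg_add_two (m : ℕ) : sg (m+2) = sg m := by
  rw [show m+2 = (m+1)+1 from rfl, sg_succ, sg_succ, neg_neg]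

lemma a_eq_zero {n i : ℕ} (h : 2*n < i) : a n i = 0 := by
  rw [a, Q_eq_zero h, zero_mul, mul_zero]

lemma arG (n j : ℕ) :
    a (n+1) (j+2) = a n (j+1) * (1 + q^(2*n+1)) + a n (j+2) * (-(q^n))
      + a n j * (-(q^(n+1))) := by
  rcases le_or_gt j (2*n) with h | h
  · rw [a, a, a, a]
    have c1 : ((j+2:ℕ):ℤ) - ((n+1:ℕ):ℤ) = (j:ℤ)+1-n := by push_cast; ring
    have c2 : ((j+1:ℕ):ℤ) - ((n:ℕ):ℤ) = (j:ℤ)+1-n := by push_cast; ring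
    have c3 : ((j+2:ℕ):ℤ) - ((n:ℕ):ℤ) = ((j:ℤ)+1-n)+1 := by push_cast; ring
    have c4 : ((j:ℕ):ℤ) - ((n:ℕ):ℤ) = ((j:ℤ)+1-n)-1 := by push_cast; ring
    rw [c1, c2, c3, c4]
    set k : ℤ := (j:ℤ)+1-n with hk
    have hcsub : ((2*n - j : ℕ):ℤ) = 2*(n:ℤ) - j := by omega
    have E1 : t (k+1) + n = t k + (j+2) := by
      apply t_add
      push_cast [hk]
      ring
    have E2 : t (k-1) + (n+1) = t k + (2*n - j) := by
      apply t_add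
      push_cast [hk, hcsub]
      ring
    have hexp1 : q^n * q^(t (k+1)) = q^(j+2) * q^(t k) := pow_q_t_eq (by omega)
    have hexp2 : q^(n+1) * q^(t (k-1)) = q^(2*n-j) * q^(t k) := pow_q_t_eq (by omega)
    have hQ : Q (2*(n+1)) (j+2) = (1+q^(2*n+1)) * Q (2*n) (j+1) + q^(j+2) * Q (2*n) (j+2)
        + q^(2*n-j) * Q (2*n) j := by
      rw [show 2*(n+1) = 2*n+2 from by ring]
      exact Q_step n j
    have s3 : sg (n+1+(j+2)) = -(sg (n+j)) := by
      rw [show n+1+(j+2) = ((n+j)+1)+2 from by ring, sg_add_two, sg_succ]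
    have s1 : sg (n+(j+1)) = -(sg (n+j)) := by rw [show n+(j+1) = (n+j)+1 from by ring, sg_succ]
    have s2 : sg (n+(j+2)) = sg (n+j) := by rw [show n+(j+2) = (n+j)+2 from by ring, sg_add_two]
    rw [hQ, s3, s1, s2]
    linear_combination (sg (n+j) * Q (2*n) (j+2)) * hexp1 + (sg (n+j) * Q (2*n) j) * hexp2
  · rw [a_eq_zero (show 2*(n+1) < j+2 by omega), a_eq_zero (show 2*n < j+1 by omega),
      a_eq_zero (show 2*n < j+2 by omega), a_eq_zero h]
    ring

noncomputable def P (n : ℕ) : Polynomial R :=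
  ∏ j ∈ Icc 1 n, ((1 - Polynomial.C (q^j) * Polynomial.X) * (Polynomial.X - Polynomial.C (q^(j-1))))

lemma coeff_P : ∀ n d, (P n).coeff d = a n d
  | 0, d => by
      rw [P, show Icc 1 0 = (∅ : Finset ℕ) from rfl, Finset.prod_empty, Polynomial.coeff_one]
      rcases Nat.eq_zero_or_pos d with rfl | hd
      · have ht0 : t (((0:ℕ):ℤ) - ((0:ℕ):ℤ)) = 0 := rfl
        rw [if_pos rfl, a, sg, Q_zero, ht0]
        norm_num
      · rw [if_neg (by omega), a_eq_zero (by omega)]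
  | n+1, d => by
      have hP : P (n+1) = P n * ((1 - Polynomial.C (q^(n+1)) * Polynomial.X)
          * (Polynomial.X - Polynomial.C (q^(n+1-1)))) := by
        rw [P, P, Finset.prod_Icc_succ_top (show 1 ≤ n+1 by omega)]
      rw [show n+1-1 = n from rfl] at hP
      have hC : Polynomial.C (q^(2*n+1)) = Polynomial.C (q^(n+1)) * Polynomial.C (q^n) := by
        rw [← map_mul, ← pow_add, show n+1+n = 2*n+1 from by omega]
      have hf : (1 - Polynomial.C (q^(n+1)) * Polynomial.X)
          * (Polynomial.X - Polynomial.C (q^n))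
          = Polynomial.C (-(q^n)) + Polynomial.C (1 + q^(2*n+1)) * Polynomial.X
            + Polynomial.C (-(q^(n+1))) * Polynomial.X^2 := by
        rw [map_neg, map_neg, map_add, map_one, hC]
        ring
      have h1 : P n * (Polynomial.C (1 + q^(2*n+1)) * Polynomial.X)
          = (P n * Polynomial.C (1 + q^(2*n+1))) * Polynomial.X^1 := by ring
      have h2 : P n * (Polynomial.C (-(q^(n+1))) * Polynomial.X^2)
          = (P n * Polynomial.C (-(q^(n+1)))) * Polynomial.X^2 := by ring
      rw [hP, hf, mul_add, mul_add, h1, h2, Polynomial.coeff_add, Polynomial.coeff_add,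
        Polynomial.coeff_mul_C, Polynomial.coeff_mul_X_pow', Polynomial.coeff_mul_X_pow',
        Polynomial.coeff_mul_C, Polynomial.coeff_mul_C, coeff_P n, coeff_P n, coeff_P n]
      match d with
      | 0 => simp only [if_neg (by omega : ¬ (1 ≤ 0)), if_neg (by omega : ¬ (2 ≤ 0))]
             rw [ar0]
             ring
      | 1 => simp only [if_pos (le_refl 1), if_neg (by omega : ¬ (2 ≤ 1))]
             norm_num
             linear_combination -(ar1 n)
      | (j+2) => simp only [if_pos (by omega : 1 ≤ j+2), if_pos (by omega : 2 ≤ j+2)]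
                 rw [show j+2-1 = j+1 from rfl, show j+2-2 = j from rfl]
                 linear_combination -(arG n j)



lemma rep_P (n : ℕ) : P n = ∑ i ∈ range (2*n+1), Polynomial.C (a n i) * Polynomial.X^i := by
  ext d
  rw [coeff_P, Polynomial.finset_sum_coeff]
  simp only [Polynomial.coeff_C_mul, Polynomial.coeff_X_pow, mul_ite, mul_one, mul_zero]
  rw [Finset.sum_ite_eq (range (2*n+1)) d (fun i => a n i)]
  rcases le_or_gt d (2*n) with h | h
  · rw [if_pos (by simp [Finset.mem_range]; omega)]
  · rw [if_neg (by simp [Finset.mem_range]; omega), a_eq_zero (by omega)]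

lemma deriv_sum (n : ℕ) :
    (Polynomial.derivative (P n)).eval 1 = ∑ i ∈ range (2*n+1), a n i * (i : R) := by
  rw [rep_P, map_sum]
  rw [Polynomial.eval_finset_sum]
  apply Finset.sum_congr rfl
  intro i _
  rw [Polynomial.derivative_C_mul_X_pow, Polynomial.eval_mul, Polynomial.eval_pow,
    Polynomial.eval_C, Polynomial.eval_X, one_pow, mul_one]

lemma deriv_prod (n : ℕ) (hn : 1 ≤ n) :
    (Polynomial.derivative (P n)).eval 1 = E n * E (n-1) := by
  classical
  have hins : Icc 1 n = insert 1 (Icc 2 n) := by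
    ext x
    simp only [Finset.mem_Icc, Finset.mem_insert]
    omega
  have hsplit : P n = ((1 - Polynomial.C q * Polynomial.X)
      * ∏ j ∈ Icc 2 n, ((1 - Polynomial.C (q^j) * Polynomial.X)
        * (Polynomial.X - Polynomial.C (q^(j-1))))) * (Polynomial.X - Polynomial.C 1) := by
    rw [P, hins, Finset.prod_insert (by simp)]
    rw [pow_one, show (1:ℕ) - 1 = 0 from rfl, pow_zero, map_one]
    ring
  rw [hsplit, Polynomial.derivative_mul, Polynomial.eval_add, Polynomial.eval_mul,
    Polynomial.eval_mul, Polynomial.eval_sub, Polynomial.eval_X, Polynomial.eval_C,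
    sub_self, mul_zero, zero_add, Polynomial.derivative_sub, Polynomial.derivative_X,
    Polynomial.derivative_C, sub_zero, Polynomial.eval_one, mul_one, Polynomial.eval_mul,
    Polynomial.eval_sub, Polynomial.eval_one, Polynomial.eval_mul, Polynomial.eval_C,
    Polynomial.eval_X, mul_one, Polynomial.eval_prod]
  have h2 : ∀ j ∈ Icc 2 n, (((1 - Polynomial.C (q^j) * Polynomial.X)
      * (Polynomial.X - Polynomial.C (q^(j-1)))).eval 1) = (1 - q^j) * (1 - q^(j-1)) := by
    intro j hj
    rw [Polynomial.eval_mul, Polynomial.eval_sub, Polynomial.eval_sub, Polynomial.eval_mul,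
      Polynomial.eval_one, Polynomial.eval_C, Polynomial.eval_C, Polynomial.eval_X, mul_one]
  rw [Finset.prod_congr rfl h2, Finset.prod_mul_distrib]
  have hE1 : E n = (1 - q) * ∏ j ∈ Icc 2 n, (1 - q^j) := by
    rw [E, hins, Finset.prod_insert (by simp), pow_one]
  have hE2 : ∏ j ∈ Icc 2 n, (1 - q^(j-1)) = E (n-1) := by
    rw [E, show (2:ℕ) = 1 + 1 from rfl, show n = (n-1) + 1 from by omega,
      ← Finset.map_add_right_Icc 1 (n-1) 1, Finset.prod_map]
    apply Finset.prod_congr (by rw [Nat.add_sub_cancel])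
    intro x _
    simp [addRightEmbedding]
  rw [hE1, hE2]
  ring



lemma dvd_mul_congr {c : ℕ} {f g f' g' : R} (h : (PowerSeries.X:R)^c ∣ f - g)
    (h' : (PowerSeries.X:R)^c ∣ f' - g') : (PowerSeries.X:R)^c ∣ f*f' - g*g' := by
  have e : f*f' - g*g' = f' * (f - g) + g * (f' - g') := by ring
  rw [e]
  exact dvd_add (h.mul_left _) (h'.mul_left _)

lemma E_dvd_helper {c a : ℕ} (ha : c ≤ a+1) : ∀ b, a ≤ b → (PowerSeries.X:R)^c ∣ E b - E a := by
  intro b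
  induction b with
  | zero => intro h; rw [Nat.le_zero.mp h]; simp
  | succ b ih =>
      intro h
      rcases Nat.lt_or_ge a (b+1) with h' | h'
      · have hb : a ≤ b := by omega
        have h1 := ih hb
        have h2 : (PowerSeries.X:R)^c ∣ q^(b+1) * E b :=
          Dvd.dvd.mul_right (pow_dvd_pow _ (by omega)) _
        have e : E (b+1) - E a = (E b - E a) - q^(b+1) * E b := by rw [E_succ]; ring
        rw [e]
        exact dvd_sub h1 h2
      · have : a = b+1 := by omega
        rw [this]; simp

lemma E_congr {c a b : ℕ} (ha : c ≤ a+1) (hb : c ≤ b+1) :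
    (PowerSeries.X:R)^c ∣ E a - E b := by
  rcases le_total a b with h | h
  · rw [show E a - E b = -(E b - E a) from by ring]
    exact (E_dvd_helper ha b h).neg_right
  · exact E_dvd_helper hb a h

lemma E_unit (n : ℕ) : IsUnit (E n) := by
  rw [PowerSeries.isUnit_iff_constantCoeff]
  have : PowerSeries.constantCoeff (E n) = 1 := by
    induction n with
    | zero => rw [E_zero, map_one]
    | succ n ih =>
        rw [E_succ, map_mul, ih, one_mul, map_sub, map_one, map_pow,
          PowerSeries.constantCoeff_X, zero_pow (by omega : n+1 ≠ 0), sub_zero]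
  rw [this]
  exact isUnit_one

lemma dvd_of_mul_unit {c : ℕ} {f g u : R} (hu : IsUnit u)
    (h : (PowerSeries.X:R)^c ∣ f*u - g*u) : (PowerSeries.X:R)^c ∣ f - g := by
  obtain ⟨v, hv⟩ := hu.exists_right_inv
  have e : f - g = (f*u - g*u) * v := by
    calc f - g = (f - g) * (u * v) := by rw [hv, mul_one]
    _ = (f*u - g*u) * v := by ring
  rw [e]
  exact h.mul_right v

lemma QE_one {N n i : ℕ} (hi : i ≤ 2*n) (h1 : N+1 ≤ i) (h2 : N+1 ≤ 2*n - i) (h3 : N+1 ≤ n) :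
    (PowerSeries.X:R)^(N+1) ∣ Q (2*n) i * E n - 1 := by
  apply dvd_of_mul_unit ((E_unit i).mul (E_unit (2*n - i)))
  have e : Q (2*n) i * E n * (E i * E (2*n-i)) - 1 * (E i * E (2*n-i))
      = E n * (Q (2*n) i * (E i * E (2*n-i))) - E i * E (2*n-i) := by ring
  rw [e, Q_mul_E (2*n) i hi]
  exact dvd_mul_congr (E_congr (by omega) (by omega)) (E_congr (by omega) (by omega))

lemma coeff_eq_of_dvd {c : ℕ} {f g : R} (h : (PowerSeries.X:R)^c ∣ f - g) {d : ℕ} (hd : d < c) :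
    PowerSeries.coeff (R := ℤ) d f = PowerSeries.coeff (R := ℤ) d g := by
  have h2 := (PowerSeries.X_pow_dvd_iff.mp h) d hd
  rw [map_sub, sub_eq_zero] at h2
  exact h2



lemma bound_k {N : ℕ} {k : ℤ} (h : t k ≤ N) : -(N:ℤ)-1 ≤ k ∧ k ≤ (N:ℤ)+1 := by
  have h' : (t k : ℤ) ≤ (N:ℤ) := by exact_mod_cast h
  have hc := t_cast k
  constructor
  · by_contra hcon
    push_neg at hcon
    have h1 : (N:ℤ)+2 ≤ -k := by omega
    have h2 : (N:ℤ)+1 ≤ -(k+1) := by omega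
    have h3 := mul_le_mul h1 h2 (by omega) (by omega)
    nlinarith
  · by_contra hcon
    push_neg at hcon
    have h1 : (N:ℤ)+2 ≤ k := by omega
    have h2 : (N:ℤ)+3 ≤ k+1 := by omega
    have h3 := mul_le_mul h1 h2 (by omega) (by omega)
    nlinarith

lemma term_coeff (N n i : ℕ) (hn : n = 2*N+3) (hi : i < 2*n+1) :
    PowerSeries.coeff (R := ℤ) N ((a n i * (i:R)) * E n)
      = if t ((i:ℤ) - (n:ℤ)) = N then (-1:ℤ)^(n+i) * i else 0 := by
  set k : ℤ := (i:ℤ) - (n:ℤ) with hk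
  have hsgC : sg (n+i) = PowerSeries.C (R := ℤ) ((-1)^(n+i)) := by
    rw [sg, map_pow, map_neg, map_one]
  have hiC : (i : R) = PowerSeries.C (R := ℤ) ((i:ℕ):ℤ) := (map_natCast (PowerSeries.C (R := ℤ)) i).symm
  have hterm : (a n i * (i:R)) * E n
      = PowerSeries.C (R := ℤ) ((-1)^(n+i) * (i:ℤ)) * (q^(t k) * (Q (2*n) i * E n)) := by
    rw [a, hsgC, map_mul, ← hiC]
    ring
  rw [hterm, PowerSeries.coeff_C_mul]
  rcases le_or_gt (t k) N with htk | htk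
  · have hb := bound_k htk
    have hiN : N+1 ≤ i := by omega
    have h2n : N+1 ≤ 2*n - i := by omega
    have hQE := QE_one (show i ≤ 2*n by omega) hiN h2n (show N+1 ≤ n by omega)
    rw [PowerSeries.coeff_X_pow_mul' _ _ _, if_pos htk,
      coeff_eq_of_dvd hQE (show N - t k < N+1 by omega), PowerSeries.coeff_one]
    rcases eq_or_lt_of_le htk with heq | hlt
    · rw [if_pos (by omega), if_pos heq, mul_one]
    · rw [if_neg (by omega), if_neg (by omega), mul_zero]
  · rw [PowerSeries.coeff_X_pow_mul' _ _ _, if_neg (by omega), if_neg (by omega), mul_zero]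



lemma int_mul_succ_nonneg (k : ℤ) : 0 ≤ k * (k+1) := by
  rcases le_or_gt 0 k with h | h
  · exact mul_nonneg h (by omega)
  · nlinarith [mul_nonneg (show (0:ℤ) ≤ -k by omega) (show (0:ℤ) ≤ -(k+1) by omega)]

lemma final_sum (N : ℕ) :
    ∑ i ∈ range (2*(2*N+3)+1),
        (if t ((i:ℤ) - ((2*N+3:ℕ):ℤ)) = N then (-1:ℤ)^((2*N+3)+i) * i else 0)
      = ∑ m ∈ Icc (-(N:ℤ)) (N:ℤ), if 2*m^2 + m = (N:ℤ) then 4*m+1 else 0 := by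
  by_cases hex : ∃ m : ℤ, 2*m^2 + m = (N:ℤ)
  · obtain ⟨m₀, hm₀⟩ := hex
    set n : ℕ := 2*N+3 with hn
    set i₀ : ℕ := (2*(N:ℤ)+3+2*m₀).toNat with hi₀
    set i₁ : ℕ := (2*(N:ℤ)+2-2*m₀).toNat with hi₁
    have hm₀N : -(N:ℤ) ≤ m₀ ∧ m₀ ≤ (N:ℤ) := by
      constructor
      · nlinarith [int_mul_succ_nonneg m₀, hm₀]
      · nlinarith [int_mul_succ_nonneg m₀, hm₀, sq_nonneg m₀]
    -- condition characterization
    have hcond : ∀ i : ℕ, (t ((i:ℤ) - (n:ℤ)) = N) ↔ (i = i₀ ∨ i = i₁) := by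
      intro i
      constructor
      · intro h
        have hc := t_cast ((i:ℤ) - (n:ℤ))
        rw [h] at hc
        have hfac : (((i:ℤ) - n) - 2*m₀) * (((i:ℤ) - n) + 2*m₀ + 1) = 0 := by
          linear_combination -hc - 2*hm₀
        rcases mul_eq_zero.mp hfac with h2 | h2
        · left; omega
        · right; omega
      · intro h
        rcases h with rfl | rfl
        · have hk2 : (i₀:ℤ) - (n:ℤ) = 2*m₀ := by omega
          have hc := t_cast ((i₀:ℤ) - (n:ℤ))
          rw [hk2] at hc
          have : (t ((i₀:ℤ) - (n:ℤ)) : ℤ) * 2 = 2*(N:ℤ) := by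
            rw [t_cast, hk2]; linear_combination 2*hm₀
          omega
        · have hk2 : (i₁:ℤ) - (n:ℤ) = -(2*m₀) - 1 := by omega
          have : (t ((i₁:ℤ) - (n:ℤ)) : ℤ) * 2 = 2*(N:ℤ) := by
            rw [t_cast, hk2]; linear_combination 2*hm₀
          omega
    have hne : i₀ ≠ i₁ := by omega
    have hsplit : ∀ i ∈ range (2*n+1),
        (if t ((i:ℤ) - (n:ℤ)) = N then (-1:ℤ)^(n+i) * i else 0)
          = (if i = i₀ then (-1:ℤ)^(n+i) * i else 0)
            + (if i = i₁ then (-1:ℤ)^(n+i) * i else 0) := by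
      intro i _
      by_cases h0 : i = i₀
      · rw [if_pos ((hcond i).mpr (Or.inl h0)), if_pos h0, if_neg (by omega), add_zero]
      · by_cases h1 : i = i₁
        · rw [if_pos ((hcond i).mpr (Or.inr h1)), if_neg h0, if_pos h1, zero_add]
        · rw [if_neg (fun hc => by rcases (hcond i).mp hc with h | h; exact h0 h; exact h1 h),
            if_neg h0, if_neg h1, add_zero]
    rw [Finset.sum_congr rfl hsplit, Finset.sum_add_distrib,
      Finset.sum_ite_eq' (range (2*n+1)) i₀ (fun i => (-1:ℤ)^(n+i) * i),
      Finset.sum_ite_eq' (range (2*n+1)) i₁ (fun i => (-1:ℤ)^(n+i) * i),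
      if_pos (by simp only [Finset.mem_range]; omega),
      if_pos (by simp only [Finset.mem_range]; omega)]
    have huniq : ∀ m : ℤ, (2*m^2 + m = (N:ℤ)) ↔ m = m₀ := by
      intro m
      constructor
      · intro h
        have hfac : (m - m₀) * (2*(m + m₀) + 1) = 0 := by linear_combination h - hm₀
        rcases mul_eq_zero.mp hfac with h2 | h2
        · omega
        · omega
      · rintro rfl; exact hm₀
    simp only [huniq]
    rw [Finset.sum_ite_eq' (Icc (-(N:ℤ)) (N:ℤ)) m₀ (fun m => 4*m+1),
      if_pos (by simp only [Finset.mem_Icc]; omega)]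
    have hev : (-1:ℤ)^(n+i₀) = 1 := by
      apply Even.neg_one_pow
      have : ((n + i₀ : ℕ) : ℤ) = 2*(2*(N:ℤ)+3+m₀) := by push_cast; omega
      rw [← Int.even_coe_nat]
      exact ⟨2*(N:ℤ)+3+m₀, by omega⟩
    have hodd : (-1:ℤ)^(n+i₁) = -1 := by
      apply Odd.neg_one_pow
      rw [← Int.odd_coe_nat]
      exact ⟨2*(N:ℤ)+2-m₀, by push_cast; omega⟩
    rw [hev, hodd]
    have hc0 : ((i₀:ℕ):ℤ) = 2*(N:ℤ)+3+2*m₀ := by omega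
    have hc1 : ((i₁:ℕ):ℤ) = 2*(N:ℤ)+2-2*m₀ := by omega
    rw [hc0, hc1]
    ring
  · rw [Finset.sum_eq_zero, Finset.sum_eq_zero]
    · intro m hm
      rw [if_neg (fun hc => hex ⟨m, hc⟩)]
    · intro i hi
      rw [if_neg]
      intro hc
      have hcast := t_cast ((i:ℤ) - ((2*N+3:ℕ):ℤ))
      rw [hc] at hcast
      set k : ℤ := (i:ℤ) - ((2*N+3:ℕ):ℤ) with hk
      rcases Int.even_or_odd k with ⟨m, hm⟩ | ⟨m, hm⟩
      · apply hex
        refine ⟨m, ?_⟩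
        have h4 : 2*(2*m^2 + m) = 2*(N:ℤ) := by
          rw [hm] at hcast; linear_combination -hcast
        linarith
      · apply hex
        refine ⟨-m-1, ?_⟩
        have h4 : 2*(2*(-m-1)^2 + (-m-1)) = 2*(N:ℤ) := by
          rw [hm] at hcast; linear_combination -hcast
        linarith

end EulerEta

/-- Euler's identity `η(τ)³ = Σ_{m∈ℤ} (4m+1) q^{(4m+1)²/8}`, stated as an identity of
formal power series in `q`: dividing both sides by `q^{3/8}` (and noting
`(4m+1)²/8 - 3/8 = 2m² + m`), it reads `∏_{n≥1} (1-q^n)³ = Σ_{m∈ℤ} (4m+1) q^{2m²+m}`.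
Coefficient-wise: for each `N`, the `N`-th coefficient of the (truncation-stable) product
`∏_{n=1}^{N+1} (1 - q^n)³` equals the sum of `4m+1` over integers `m` with `2m² + m = N`. -/
theorem euler_eta_cubed_identity (N : ℕ) :
    (PowerSeries.coeff (R := ℤ) N) (∏ n ∈ Finset.Icc 1 (N + 1), (1 - PowerSeries.X ^ n) ^ 3) =
      ∑ m ∈ Finset.Icc (-(N : ℤ)) (N : ℤ), if 2 * m ^ 2 + m = (N : ℤ) then 4 * m + 1 else 0 := by
  classical
  open EulerEta in
  have h1 : ∏ n ∈ Finset.Icc 1 (N + 1), (1 - PowerSeries.X ^ n) ^ 3 = E (N+1)^3 := by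
    rw [E, ← Finset.prod_pow]
  set n : ℕ := 2*N+3 with hn
  have hcong : (PowerSeries.X:R)^(N+1) ∣ E (N+1)^3 - E n * (E n * E (n-1)) := by
    have e : E (N+1)^3 = E (N+1) * (E (N+1) * E (N+1)) := by ring
    rw [e]
    exact dvd_mul_congr (E_congr (by omega) (by omega))
      (dvd_mul_congr (E_congr (by omega) (by omega)) (E_congr (by omega) (by omega)))
  rw [h1, coeff_eq_of_dvd hcong (by omega)]
  have hF : E n * E (n-1) = ∑ i ∈ Finset.range (2*n+1), a n i * (i : R) :=
    (deriv_prod n (by omega)).symm.trans (deriv_sum n)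
  rw [hF, Finset.mul_sum]
  have hcomm : ∀ i ∈ Finset.range (2*n+1), E n * (a n i * (i:R)) = (a n i * (i:R)) * E n :=
    fun i _ => mul_comm _ _
  rw [Finset.sum_congr rfl hcomm, map_sum]
  rw [Finset.sum_congr rfl (fun i hi => term_coeff N n i hn (Finset.mem_range.mp hi))]
  exact final_sum N
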